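/- Let a < b be reals, let δ > 0, η > 0, C₁ ≥ 0, C₂ ≥ 0 with b − a ≤ η δ. Let g, h : [a,b] → ℝ be continuous functions with g ≥ 0 and h ≥ δ on [a,b], such that for all u, u' ∈ [a,b]: |g(u) − g(u')| ≤ C₁ |h(u) − h(u')| and |h(u) − h(u')| ≤ C₂ |u − u'|. Then for every u' ∈ [a,b]: (∫_a^b g) / (∫_a^b h) ≥ (g(u')/h(u')) · 1/(1 + C₂η/2) − (C₁C₂η/2)/(1 + C₂η/2). -/

import Mathlib

private lemma stmt_16_arith (L g' h' C₁ C₂ η I G H : ℝ)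
    (hL0 : 0 < L) (hg' : 0 ≤ g') (hh'0 : 0 < h') (hLη : L ≤ η * h')
    (hC₁ : 0 ≤ C₁) (hC₂ : 0 ≤ C₂) (hη : 0 < η)
    (hI0 : 0 ≤ I) (hIL : I ≤ L ^ 2 / 2)
    (hG0 : 0 ≤ G) (hGlow : L * g' - C₁ * C₂ * I ≤ G)
    (hH0 : 0 < H) (hHup : H ≤ L * h' + C₂ * I) :
    G / H ≥ g' / h' * (1 / (1 + C₂ * η / 2)) - (C₁ * C₂ * η / 2) / (1 + C₂ * η / 2) := by
  have hD0 : (0:ℝ) < 1 + C₂ * η / 2 := by positivity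
  have hRHS : g' / h' * (1 / (1 + C₂ * η / 2)) - (C₁ * C₂ * η / 2) / (1 + C₂ * η / 2)
      = (2 * g' - C₁ * C₂ * η * h') / (2 * h' * (1 + C₂ * η / 2)) := by
    field_simp
  rw [ge_iff_le, hRHS, div_le_div_iff₀ (by positivity) hH0]
  rcases le_or_gt (2 * g' - C₁ * C₂ * η * h') 0 with hneg | hpos
  · have h1 : (2 * g' - C₁ * C₂ * η * h') * H ≤ 0 :=
      mul_nonpos_of_nonpos_of_nonneg hneg hH0.le
    have h2 : 0 ≤ G * (2 * h' * (1 + C₂ * η / 2)) := by positivity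
    linarith
  · have step1 : (2 * g' - C₁ * C₂ * η * h') * H
        ≤ (2 * g' - C₁ * C₂ * η * h') * (L * h' + C₂ * I) :=
      mul_le_mul_of_nonneg_left hHup hpos.le
    have step2 : (2 * g' - C₁ * C₂ * η * h') * (L * h' + C₂ * I)
        ≤ (L * g' - C₁ * C₂ * I) * (2 * h' + C₂ * η * h') := by
      nlinarith [mul_nonneg (mul_nonneg hC₂ hg') (by linarith : (0:ℝ) ≤ L ^ 2 - 2 * I),
        mul_nonneg (mul_nonneg (mul_nonneg hC₂ hg') hL0.le)
          (by linarith : (0:ℝ) ≤ η * h' - L),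
        mul_nonneg (mul_nonneg (mul_nonneg hC₁ hC₂) hh'0.le)
          (by linarith : (0:ℝ) ≤ L ^ 2 - 2 * I),
        mul_nonneg (mul_nonneg (mul_nonneg (mul_nonneg hC₁ hC₂) hh'0.le) hL0.le)
          (by linarith : (0:ℝ) ≤ η * h' - L)]
    have step3 : (L * g' - C₁ * C₂ * I) * (2 * h' + C₂ * η * h')
        ≤ G * (2 * h' + C₂ * η * h') :=
      mul_le_mul_of_nonneg_right hGlow (by positivity)
    have heq : G * (2 * h' + C₂ * η * h') = G * (2 * h' * (1 + C₂ * η / 2)) := by ring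
    linarith

/-- Discretization lemma, lower bound: under the coupled Lipschitz conditions
and `h ≥ δ`, on an interval of length at most `η δ`, the ratio of integrals is
bounded below in terms of any pointwise ratio `g u' / h u'`. -/
theorem stmt_16 (a b : ℝ) (hab : a < b) (δ η C₁ C₂ : ℝ)
    (hδ : 0 < δ) (hη : 0 < η) (hC₁ : 0 ≤ C₁) (hC₂ : 0 ≤ C₂)
    (hlen : b - a ≤ η * δ)
    (g h : ℝ → ℝ)
    (hg : ContinuousOn g (Set.Icc a b)) (hh : ContinuousOn h (Set.Icc a b))
    (hg0 : ∀ u ∈ Set.Icc a b, 0 ≤ g u) (hhδ : ∀ u ∈ Set.Icc a b, δ ≤ h u)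
    (hLip1 : ∀ u ∈ Set.Icc a b, ∀ u' ∈ Set.Icc a b, |g u - g u'| ≤ C₁ * |h u - h u'|)
    (hLip2 : ∀ u ∈ Set.Icc a b, ∀ u' ∈ Set.Icc a b, |h u - h u'| ≤ C₂ * |u - u'|) :
    ∀ u' ∈ Set.Icc a b,
      (∫ u in a..b, g u) / (∫ u in a..b, h u)
        ≥ (g u' / h u') * (1 / (1 + C₂ * η / 2))
          - (C₁ * C₂ * η / 2) / (1 + C₂ * η / 2) := by
  intro u' hu'
  obtain ⟨hau', hu'b⟩ := hu'
  have hab' : a ≤ b := hab.le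
  have huIcc : Set.uIcc a b = Set.Icc a b := Set.uIcc_of_le hab'
  have hL0 : 0 < b - a := by linarith
  have hg' : 0 ≤ g u' := hg0 u' ⟨hau', hu'b⟩
  have hh' : δ ≤ h u' := hhδ u' ⟨hau', hu'b⟩
  have hh'0 : 0 < h u' := lt_of_lt_of_le hδ hh'
  have hLη : b - a ≤ η * h u' := le_trans hlen (by nlinarith)
  -- integrability
  have hgi : IntervalIntegrable g MeasureTheory.volume a b :=
    (huIcc ▸ hg : ContinuousOn g (Set.uIcc a b)).intervalIntegrable
  have hhi : IntervalIntegrable h MeasureTheory.volume a b :=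
    (huIcc ▸ hh : ContinuousOn h (Set.uIcc a b)).intervalIntegrable
  have habsi : ∀ c d : ℝ, IntervalIntegrable (fun u => |u - u'|) MeasureTheory.volume c d :=
    fun c d => (continuous_abs.comp (continuous_id.sub continuous_const)).intervalIntegrable c d
  -- the integral of |u - u'|
  have hIeq : (∫ u in a..b, |u - u'|) = ((u' - a) ^ 2 + (b - u') ^ 2) / 2 := by
    have hsplit : (∫ u in a..u', |u - u'|) + (∫ u in u'..b, |u - u'|)
        = ∫ u in a..b, |u - u'| :=
      intervalIntegral.integral_add_adjacent_intervals (habsi a u') (habsi u' b)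
    have h1 : (∫ u in a..u', |u - u'|) = (u' - a) ^ 2 / 2 := by
      have hcong : ∀ u ∈ Set.uIcc a u', |u - u'| = u' - u := by
        intro u hu
        rw [Set.uIcc_of_le hau'] at hu
        rw [abs_of_nonpos (by linarith [hu.2]), neg_sub]
      rw [intervalIntegral.integral_congr hcong,
        intervalIntegral.integral_sub intervalIntegrable_const
          intervalIntegral.intervalIntegrable_id,
        intervalIntegral.integral_const, integral_id]
      simp; ring
    have h2 : (∫ u in u'..b, |u - u'|) = (b - u') ^ 2 / 2 := by
      have hcong : ∀ u ∈ Set.uIcc u' b, |u - u'| = u - u' := by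
        intro u hu
        rw [Set.uIcc_of_le hu'b] at hu
        exact abs_of_nonneg (by linarith [hu.1])
      rw [intervalIntegral.integral_congr hcong,
        intervalIntegral.integral_sub intervalIntegral.intervalIntegrable_id
          intervalIntegrable_const,
        intervalIntegral.integral_const, integral_id]
      simp; ring
    rw [← hsplit, h1, h2]; ring
  have hI0 : 0 ≤ ∫ u in a..b, |u - u'| := by rw [hIeq]; positivity
  have hIL : (∫ u in a..b, |u - u'|) ≤ (b - a) ^ 2 / 2 := by
    rw [hIeq]
    nlinarith [mul_nonneg (by linarith : (0:ℝ) ≤ u' - a) (by linarith : (0:ℝ) ≤ b - u')]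
  -- lower bound on ∫ g
  have hG0 : 0 ≤ ∫ u in a..b, g u :=
    intervalIntegral.integral_nonneg hab' (fun u hu => hg0 u hu)
  have hGlow : (b - a) * g u' - C₁ * C₂ * ∫ u in a..b, |u - u'| ≤ ∫ u in a..b, g u := by
    have hmono : (∫ u in a..b, (g u' - C₁ * C₂ * |u - u'|)) ≤ ∫ u in a..b, g u := by
      apply intervalIntegral.integral_mono_on hab'
        (intervalIntegrable_const.sub ((habsi a b).const_mul _)) hgi
      intro u hu
      have h1 := hLip1 u hu u' ⟨hau', hu'b⟩
      have h2 := hLip2 u hu u' ⟨hau', hu'b⟩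
      have h3 : |g u - g u'| ≤ C₁ * (C₂ * |u - u'|) :=
        h1.trans (mul_le_mul_of_nonneg_left h2 hC₁)
      have h4 := (abs_le.mp h3).1
      linarith
    have heq : (∫ u in a..b, (g u' - C₁ * C₂ * |u - u'|))
        = (b - a) * g u' - C₁ * C₂ * ∫ u in a..b, |u - u'| := by
      rw [intervalIntegral.integral_sub intervalIntegrable_const ((habsi a b).const_mul _),
        intervalIntegral.integral_const_mul, intervalIntegral.integral_const, smul_eq_mul]
    linarith
  -- bounds on ∫ h
  have hHlow : δ * (b - a) ≤ ∫ u in a..b, h u := by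
    have h1 : (∫ _ in a..b, δ) ≤ ∫ u in a..b, h u :=
      intervalIntegral.integral_mono_on hab' intervalIntegrable_const hhi
        (fun u hu => hhδ u hu)
    rw [intervalIntegral.integral_const, smul_eq_mul] at h1
    linarith
  have hH0 : 0 < ∫ u in a..b, h u := lt_of_lt_of_le (by positivity) hHlow
  have hHup : (∫ u in a..b, h u) ≤ (b - a) * h u' + C₂ * ∫ u in a..b, |u - u'| := by
    have hmono : (∫ u in a..b, h u) ≤ ∫ u in a..b, (h u' + C₂ * |u - u'|) := by
      apply intervalIntegral.integral_mono_on hab' hhi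
        (intervalIntegrable_const.add ((habsi a b).const_mul _))
      intro u hu
      have h2 := hLip2 u hu u' ⟨hau', hu'b⟩
      have h5 : h u - h u' ≤ |h u - h u'| := le_abs_self _
      linarith
    have heq : (∫ u in a..b, (h u' + C₂ * |u - u'|))
        = (b - a) * h u' + C₂ * ∫ u in a..b, |u - u'| := by
      rw [intervalIntegral.integral_add intervalIntegrable_const ((habsi a b).const_mul _),
        intervalIntegral.integral_const_mul, intervalIntegral.integral_const, smul_eq_mul]
    linarith
  exact stmt_16_arith (b - a) (g u') (h u') C₁ C₂ η (∫ u in a..b, |u - u'|)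
    (∫ u in a..b, g u) (∫ u in a..b, h u)
    hL0 hg' hh'0 hLη hC₁ hC₂ hη hI0 hIL hG0 hGlow hH0 hHup
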